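/- Let p ∈ (0,1], ε, δ ∈ (0,1), and let T be the least positive integer satisfying (e^{ε/(1+ε)}/(1+ε))^T + (e^{-ε/(1-ε)}/(1-ε))^T ≤ δ. Let X₁, X₂, … be i.i.d. Bernoulli(p) random variables and let N = min{n : X₁ + ⋯ + X_n = T}. Then P(p(1-ε) ≤ T/N ≤ p(1+ε)) ≥ 1 - δ. -/

import Mathlib

open MeasureTheory ProbabilityTheory

/-- Intermediate value property for 0/1-valued partial sums. -/
lemma aux_exists_sum_eq {Ω : Type*} (X : ℕ → Ω → Bool) (ω : Ω) (T : ℕ) :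
    ∀ m, T ≤ ∑ i ∈ Finset.range m, (if X i ω then 1 else 0) →
      ∃ n ≤ m, ∑ i ∈ Finset.range n, (if X i ω then 1 else 0) = T := by
  intro m
  induction m with
  | zero =>
    intro h
    simp only [Finset.range_zero, Finset.sum_empty, Nat.le_zero] at h
    exact ⟨0, le_rfl, by simpa using h.symm⟩
  | succ m ih =>
    intro h
    by_cases h' : T ≤ ∑ i ∈ Finset.range m, (if X i ω then 1 else 0)
    · obtain ⟨n, hn, hs⟩ := ih h'
      exact ⟨n, hn.trans (Nat.le_succ m), hs⟩
    · push_neg at h'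
      have hstep : (∑ i ∈ Finset.range (m + 1), (if X i ω then 1 else 0))
          ≤ (∑ i ∈ Finset.range m, (if X i ω then 1 else 0)) + 1 := by
        rw [Finset.sum_range_succ]
        gcongr
        split <;> omega
      refine ⟨m + 1, le_rfl, le_antisymm ?_ h⟩
      omega

set_option maxHeartbeats 1000000 in
/-- PAC guarantee of the adaptive-stopping estimator: if `T` is the least
positive integer with `(e^{ε/(1+ε)}/(1+ε))^T + (e^{-ε/(1-ε)}/(1-ε))^T ≤ δ`,
the `Xᵢ` are i.i.d. Bernoulli(p), and `N` is the index of the `T`-th success,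
then `P(p(1-ε) ≤ T/N ≤ p(1+ε)) ≥ 1 - δ`. -/
theorem negBinomial_estimator_pac
    {Ω : Type*} [MeasurableSpace Ω] (μ : Measure Ω) [IsProbabilityMeasure μ]
    (p : ℝ) (hp : p ∈ Set.Ioc (0:ℝ) 1)
    (ε δ : ℝ) (hε : ε ∈ Set.Ioo (0:ℝ) 1) (hδ : δ ∈ Set.Ioo (0:ℝ) 1)
    (T : ℕ) (hTpos : 0 < T)
    (hT : (Real.exp (ε / (1 + ε)) / (1 + ε)) ^ T
            + (Real.exp (-ε / (1 - ε)) / (1 - ε)) ^ T ≤ δ)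
    (hTmin : ∀ T' : ℕ, 0 < T' →
      (Real.exp (ε / (1 + ε)) / (1 + ε)) ^ T'
        + (Real.exp (-ε / (1 - ε)) / (1 - ε)) ^ T' ≤ δ → T ≤ T')
    (X : ℕ → Ω → Bool) (hXmeas : ∀ i, Measurable (X i))
    (hXindep : iIndepFun X μ)
    (hXdist : ∀ i, μ {ω | X i ω = true} = ENNReal.ofReal p)
    (N : Ω → ℕ)
    (hN : ∀ ω, N ω = sInf {n : ℕ | ∑ i ∈ Finset.range n, (if X i ω then 1 else 0) = T}) :
    ENNReal.ofReal (1 - δ)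
      ≤ μ {ω | p * (1 - ε) ≤ (T : ℝ) / (N ω : ℝ) ∧ (T : ℝ) / (N ω : ℝ) ≤ p * (1 + ε)} := by
  obtain ⟨hp0, hp1⟩ := hp
  obtain ⟨hε0, hε1⟩ := hε
  obtain ⟨hδ0, hδ1⟩ := hδ
  have h1ε : (0:ℝ) < 1 + ε := by linarith
  have h1ε' : (0:ℝ) < 1 - ε := by linarith
  -- real-valued indicator variables and partial sums
  set Y : ℕ → Ω → ℝ := fun i ω => if X i ω then 1 else 0 with hYdef
  set Sn : ℕ → Ω → ℕ := fun n ω => ∑ i ∈ Finset.range n, (if X i ω then 1 else 0) with hSndef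
  have hYmeas : ∀ i, Measurable (Y i) := fun i => by
    have : Y i = (fun b : Bool => if b then (1:ℝ) else 0) ∘ X i := rfl
    rw [this]
    exact (Measurable.of_discrete).comp (hXmeas i)
  have hYindep : iIndepFun Y μ :=
    hXindep.comp (fun _ b => if b then (1:ℝ) else 0) (fun _ => Measurable.of_discrete)
  have hSval : ∀ n ω, (∑ i ∈ Finset.range n, Y i) ω = (Sn n ω : ℝ) := by
    intro n ω
    simp only [Finset.sum_apply, hYdef, hSndef]
    push_cast
    exact Finset.sum_congr rfl (fun i _ => by split <;> simp)
  have hSmeas : ∀ n, Measurable (∑ i ∈ Finset.range n, Y i) := by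
    intro n
    have he : (∑ i ∈ Finset.range n, Y i) = fun ω => ∑ i ∈ Finset.range n, Y i ω := by
      funext ω; exact Finset.sum_apply ω (Finset.range n) Y
    rw [he]
    exact Finset.measurable_sum _ (fun i _ => hYmeas i)
  have hSbound : ∀ n ω, (Sn n ω : ℝ) ≤ (n : ℝ) := by
    intro n ω
    have : Sn n ω ≤ n := by
      calc Sn n ω ≤ ∑ _i ∈ Finset.range n, 1 :=
            Finset.sum_le_sum (fun i _ => by split <;> omega)
        _ = n := by simp
    exact_mod_cast this
  have hSnonneg : ∀ n ω, (0:ℝ) ≤ (Sn n ω : ℝ) := fun n ω => Nat.cast_nonneg _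
  -- moment generating function of each Yᵢ
  have hmgfY : ∀ i t, mgf (Y i) μ t = 1 + p * (Real.exp t - 1) := by
    intro i t
    have hAmeas : MeasurableSet {ω | X i ω = true} :=
      (hXmeas i) (MeasurableSet.of_discrete (s := {true}))
    have hfun : (fun ω => Real.exp (t * Y i ω))
        = fun ω => Set.indicator {ω | X i ω = true} (fun _ => Real.exp t - 1) ω + 1 := by
      funext ω
      simp only [hYdef, Set.indicator_apply, Set.mem_setOf_eq]
      by_cases h : X i ω = true
      · simp [h]
      · simp [h]
    rw [mgf, hfun]
    rw [integral_add ((integrable_indicator_iff hAmeas).2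
          (integrableOn_const (measure_ne_top μ _))) (integrable_const 1)]
    rw [integral_indicator_const _ hAmeas, integral_const]
    have : (μ {ω | X i ω = true}).toReal = p := by
      rw [hXdist i, ENNReal.toReal_ofReal hp0.le]
    simp [this]
    rw [measureReal_def, this]
    ring
  -- mgf of the partial sums
  have hmgfS : ∀ n t, mgf (∑ i ∈ Finset.range n, Y i) μ t
      = (1 + p * (Real.exp t - 1)) ^ n := by
    intro n t
    rw [hYindep.mgf_sum hYmeas (Finset.range n)]
    rw [Finset.prod_congr rfl (fun i _ => hmgfY i t), Finset.prod_const, Finset.card_range]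
  -- integrability of exp(t * S_n)
  have hint : ∀ n t, Integrable (fun ω => Real.exp (t * (∑ i ∈ Finset.range n, Y i) ω)) μ := by
    intro n t
    refine Integrable.mono' (integrable_const (Real.exp (|t| * n)))
      (((hSmeas n).const_mul t).exp.aestronglyMeasurable) (ae_of_all _ fun ω => ?_)
    rw [Real.norm_eq_abs, abs_of_pos (Real.exp_pos _)]
    apply Real.exp_le_exp.2
    calc t * (∑ i ∈ Finset.range n, Y i) ω ≤ |t * (∑ i ∈ Finset.range n, Y i) ω| := le_abs_self _
      _ = |t| * |(∑ i ∈ Finset.range n, Y i) ω| := abs_mul _ _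
      _ ≤ |t| * n := by
          rw [hSval n ω, abs_of_nonneg (hSnonneg n ω)]
          exact mul_le_mul_of_nonneg_left (hSbound n ω) (abs_nonneg t)
  -- the critical indices
  set x₀ : ℝ := (T : ℝ) / (p * (1 + ε)) with hx₀def
  set x₁ : ℝ := (T : ℝ) / (p * (1 - ε)) with hx₁def
  have hx₀pos : 0 < x₀ := div_pos (by exact_mod_cast hTpos) (mul_pos hp0 h1ε)
  have hx₁pos : 0 < x₁ := div_pos (by exact_mod_cast hTpos) (mul_pos hp0 h1ε')
  set n₀ : ℕ := ⌈x₀⌉₊ - 1 with hn₀def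
  set m : ℕ := ⌊x₁⌋₊ with hmdef
  have hceil_pos : 1 ≤ ⌈x₀⌉₊ := Nat.one_le_ceil_iff.2 hx₀pos
  have hn₀succ : n₀ + 1 = ⌈x₀⌉₊ := by omega
  have hn₀le : (n₀ : ℝ) ≤ x₀ := by
    have h1 : (⌈x₀⌉₊ : ℝ) < x₀ + 1 := Nat.ceil_lt_add_one hx₀pos.le
    have h2 : (n₀ : ℝ) = (⌈x₀⌉₊ : ℝ) - 1 := by
      rw [← hn₀succ]; push_cast; ring
    linarith
  have hmle : (m : ℝ) ≤ x₁ := Nat.floor_le hx₁pos.le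
  have hmgt : x₁ - 1 < (m : ℝ) := by
    have := Nat.lt_floor_add_one x₁
    linarith
  -- the two bad events
  set A : Set Ω := {ω | (T : ℝ) ≤ (∑ i ∈ Finset.range n₀, Y i) ω} with hAdef
  set B : Set Ω := {ω | (∑ i ∈ Finset.range m, Y i) ω ≤ (T : ℝ) - 1} with hBdef
  have hAmeas : MeasurableSet A := measurableSet_le measurable_const (hSmeas n₀)
  have hBmeas : MeasurableSet B := measurableSet_le (hSmeas m) measurable_const
  -- Chernoff bound for A
  have hA : (μ A).toReal ≤ (Real.exp (ε / (1 + ε)) / (1 + ε)) ^ T := by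
    set t : ℝ := Real.log (1 + ε) with htdef
    have ht0 : 0 ≤ t := Real.log_nonneg (by linarith)
    have hexpt : Real.exp t = 1 + ε := Real.exp_log h1ε
    have h1 := measure_ge_le_exp_mul_mgf (X := ∑ i ∈ Finset.range n₀, Y i) (μ := μ)
      (T : ℝ) ht0 (hint n₀ t)
    rw [hmgfS n₀ t, hexpt] at h1
    have hbase : 1 + p * (1 + ε - 1) = 1 + p * ε := by ring
    rw [hbase] at h1
    have hpow : (1 + p * ε) ^ n₀ ≤ Real.exp ((n₀ : ℝ) * (p * ε)) := by
      rw [Real.exp_nat_mul]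
      exact pow_le_pow_left₀ (by positivity) (by linarith [Real.add_one_le_exp (p * ε)]) n₀
    have h2 : (μ A).toReal ≤ Real.exp (-t * T) * Real.exp ((n₀ : ℝ) * (p * ε)) := by
      refine h1.trans ?_
      exact mul_le_mul_of_nonneg_left hpow (Real.exp_pos _).le
    rw [← Real.exp_add] at h2
    refine h2.trans ?_
    have hrhs : (Real.exp (ε / (1 + ε)) / (1 + ε)) ^ T
        = Real.exp ((T : ℝ) * (ε / (1 + ε) - t)) := by
      rw [Real.exp_nat_mul, Real.exp_sub, htdef, Real.exp_log h1ε]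
    rw [hrhs]
    apply Real.exp_le_exp.2
    have hkey : (n₀ : ℝ) * (p * ε) ≤ (T : ℝ) * (ε / (1 + ε)) := by
      have h3 : (n₀ : ℝ) * p ≤ x₀ * p := mul_le_mul_of_nonneg_right hn₀le hp0.le
      have h4 : x₀ * p = (T : ℝ) / (1 + ε) := by
        rw [hx₀def]; field_simp
      have h5 : (n₀ : ℝ) * p ≤ (T : ℝ) / (1 + ε) := by rw [← h4]; exact h3
      calc (n₀ : ℝ) * (p * ε) = ((n₀ : ℝ) * p) * ε := by ring
        _ ≤ ((T : ℝ) / (1 + ε)) * ε := mul_le_mul_of_nonneg_right h5 hε0.le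
        _ = (T : ℝ) * (ε / (1 + ε)) := by ring
    linarith
  -- Chernoff bound for B
  have hB : (μ B).toReal ≤ (Real.exp (-ε / (1 - ε)) / (1 - ε)) ^ T := by
    set t : ℝ := Real.log (1 - ε) with htdef
    have ht0 : t ≤ 0 := Real.log_nonpos (by linarith) (by linarith)
    have hexpt : Real.exp t = 1 - ε := Real.exp_log h1ε'
    have h1 := measure_le_le_exp_mul_mgf (X := ∑ i ∈ Finset.range m, Y i) (μ := μ)
      ((T : ℝ) - 1) ht0 (hint m t)
    rw [hmgfS m t, hexpt] at h1
    have hbase : 1 + p * (1 - ε - 1) = 1 + p * (-ε) := by ring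
    rw [hbase] at h1
    have hpε : p * ε ≤ ε := by nlinarith
    have hpow : (1 + p * (-ε)) ^ m ≤ Real.exp ((m : ℝ) * (p * (-ε))) := by
      rw [Real.exp_nat_mul]
      refine pow_le_pow_left₀ (by nlinarith) ?_ m
      linarith [Real.add_one_le_exp (p * (-ε))]
    have h2 : (μ B).toReal ≤ Real.exp (-t * ((T : ℝ) - 1)) * Real.exp ((m : ℝ) * (p * (-ε))) := by
      refine h1.trans ?_
      exact mul_le_mul_of_nonneg_left hpow (Real.exp_pos _).le
    rw [← Real.exp_add] at h2
    refine h2.trans ?_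
    have hrhs : (Real.exp (-ε / (1 - ε)) / (1 - ε)) ^ T
        = Real.exp ((T : ℝ) * (-ε / (1 - ε) - t)) := by
      rw [Real.exp_nat_mul, Real.exp_sub, htdef, Real.exp_log h1ε']
    rw [hrhs]
    apply Real.exp_le_exp.2
    -- need : -t*(T-1) + m*(p*(-ε)) ≤ T*(-ε/(1-ε) - t)
    have hlog : t ≤ -ε := by
      have := Real.add_one_le_exp (-ε)
      have h6 : 1 - ε ≤ Real.exp (-ε) := by linarith
      calc t = Real.log (1 - ε) := htdef
        _ ≤ Real.log (Real.exp (-ε)) := Real.log_le_log h1ε' h6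
        _ = -ε := Real.log_exp _
    have hmp : (T : ℝ) / (1 - ε) - p < (m : ℝ) * p := by
      have h3 : (x₁ - 1) * p < (m : ℝ) * p := mul_lt_mul_of_pos_right hmgt hp0
      have h4 : x₁ * p = (T : ℝ) / (1 - ε) := by
        rw [hx₁def]; field_simp
      nlinarith
    have hTε : p * ε ≤ -t := by linarith
    have hkey : (T : ℝ) * (ε / (1 - ε)) ≤ (m : ℝ) * (p * ε) - t := by
      have h7 : ((T : ℝ) / (1 - ε) - p) * ε ≤ (m : ℝ) * p * ε :=
        mul_le_mul_of_nonneg_right hmp.le hε0.le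
      have h7' : ((T : ℝ) / (1 - ε)) * ε - p * ε ≤ (m : ℝ) * (p * ε) := by
        have : ((T : ℝ) / (1 - ε) - p) * ε = ((T : ℝ) / (1 - ε)) * ε - p * ε := by ring
        rw [this] at h7; linarith [h7]
      have h9 : (T : ℝ) * (ε / (1 - ε)) = ((T : ℝ) / (1 - ε)) * ε := by ring
      linarith
    have hfin : -t * ((T:ℝ) - 1) + (m:ℝ) * (p * (-ε))
        = -((T:ℝ) * t) + t - (m:ℝ) * (p * ε) := by ring
    have hfin2 : (T:ℝ) * (-ε / (1 - ε) - t)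
        = -((T:ℝ) * (ε / (1 - ε))) - (T:ℝ) * t := by ring
    rw [hfin, hfin2]
    linarith [hkey]
  -- measure bounds in ℝ≥0∞
  have hAbound : μ A ≤ ENNReal.ofReal ((Real.exp (ε / (1 + ε)) / (1 + ε)) ^ T) := by
    rw [← ENNReal.ofReal_toReal (measure_ne_top μ A)]
    exact ENNReal.ofReal_le_ofReal hA
  have hBbound : μ B ≤ ENNReal.ofReal ((Real.exp (-ε / (1 - ε)) / (1 - ε)) ^ T) := by
    rw [← ENNReal.ofReal_toReal (measure_ne_top μ B)]
    exact ENNReal.ofReal_le_ofReal hB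
  -- the good event contains the complement of A ∪ B
  have hincl : (A ∪ B)ᶜ ⊆
      {ω | p * (1 - ε) ≤ (T : ℝ) / (N ω : ℝ) ∧ (T : ℝ) / (N ω : ℝ) ≤ p * (1 + ε)} := by
    intro ω hω
    simp only [Set.mem_compl_iff, Set.mem_union, hAdef, hBdef, Set.mem_setOf_eq, not_or,
      not_le] at hω
    obtain ⟨hω1, hω2⟩ := hω
    rw [hSval] at hω1 hω2
    have hSn₀ : Sn n₀ ω < T := by exact_mod_cast hω1
    have hSm : T ≤ Sn m ω := by
      have : (T : ℝ) - 1 < (Sn m ω : ℝ) := hω2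
      have h' : (T : ℝ) < (Sn m ω : ℝ) + 1 := by linarith
      have : (T : ℕ) < Sn m ω + 1 := by exact_mod_cast h'
      omega
    obtain ⟨n, hnm, hneq⟩ := aux_exists_sum_eq X ω T m hSm
    have hset : N ω ∈ {n : ℕ | ∑ i ∈ Finset.range n, (if X i ω then 1 else 0) = T} := by
      rw [hN ω]
      exact Nat.sInf_mem ⟨n, hneq⟩
    have hNle : N ω ≤ m := le_trans (by rw [hN ω]; exact Nat.sInf_le hneq) hnm
    have hSN : Sn (N ω) ω = T := hset
    have hNgt : n₀ < N ω := by
      by_contra hcon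
      push_neg at hcon
      have hmono : Sn (N ω) ω ≤ Sn n₀ ω :=
        Finset.sum_le_sum_of_subset (Finset.range_subset_range.2 hcon)
      omega
    have hNpos : 0 < N ω := lt_of_le_of_lt (Nat.zero_le n₀) hNgt
    have hNposR : (0:ℝ) < (N ω : ℝ) := by exact_mod_cast hNpos
    have hNge : x₀ ≤ (N ω : ℝ) := by
      have h1 : (⌈x₀⌉₊ : ℝ) ≤ (N ω : ℝ) := by
        have : ⌈x₀⌉₊ ≤ N ω := by omega
        exact_mod_cast this
      exact (Nat.le_ceil x₀).trans h1
    have hNle' : (N ω : ℝ) ≤ x₁ := le_trans (by exact_mod_cast hNle) hmle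
    constructor
    · rw [le_div_iff₀ hNposR]
      calc p * (1 - ε) * (N ω : ℝ) ≤ p * (1 - ε) * x₁ := by
            exact mul_le_mul_of_nonneg_left hNle' (by positivity)
        _ = (T : ℝ) := by rw [hx₁def]; field_simp
    · rw [div_le_iff₀ hNposR]
      calc (T : ℝ) = p * (1 + ε) * x₀ := by rw [hx₀def]; field_simp
        _ ≤ p * (1 + ε) * (N ω : ℝ) := by
            exact mul_le_mul_of_nonneg_left hNge (by positivity)
  -- final assembly
  calc ENNReal.ofReal (1 - δ) = 1 - ENNReal.ofReal δ := by
        rw [ENNReal.ofReal_sub _ hδ0.le, ENNReal.ofReal_one]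
    _ ≤ 1 - μ (A ∪ B) := by
        apply tsub_le_tsub_left
        calc μ (A ∪ B) ≤ μ A + μ B := measure_union_le A B
          _ ≤ ENNReal.ofReal ((Real.exp (ε / (1 + ε)) / (1 + ε)) ^ T)
                + ENNReal.ofReal ((Real.exp (-ε / (1 - ε)) / (1 - ε)) ^ T) :=
              add_le_add hAbound hBbound
          _ = ENNReal.ofReal ((Real.exp (ε / (1 + ε)) / (1 + ε)) ^ T
                + (Real.exp (-ε / (1 - ε)) / (1 - ε)) ^ T) :=
              (ENNReal.ofReal_add (by positivity) (by positivity)).symm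
          _ ≤ ENNReal.ofReal δ := ENNReal.ofReal_le_ofReal hT
    _ = μ ((A ∪ B)ᶜ) := (prob_compl_eq_one_sub (hAmeas.union hBmeas)).symm
    _ ≤ μ {ω | p * (1 - ε) ≤ (T : ℝ) / (N ω : ℝ) ∧ (T : ℝ) / (N ω : ℝ) ≤ p * (1 + ε)} :=
        measure_mono hincl
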